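/- Let u(λ) = Π_{k=1}^n (λ − λ_k) with all λ_k nonzero and pairwise distinct, and let V_1^{(−r)} denote the first component of the negative basic separable potentials. Then for any s ∈ ℕ, the Laurent-polynomial part of λ^{−s}/u(λ) is [λ^{−s}/u(λ)]_+ = Σ_{r=1}^{s} V_1^{(−s+r−1)} λ^{−r}. -/

import Mathlib

open Polynomial
open scoped BigOperators

private lemma zero_of_degree_lt_of_roots {n : ℕ} (l : Fin n → ℝ)
    (hdist : Function.Injective l) (p : ℝ[X]) (hdeg : p.degree < n)
    (hroot : ∀ i, p.eval (l i) = 0) : p = 0 := by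
  by_cases hp : p = 0
  · exact hp
  · have hnd : p.natDegree < n := (Polynomial.natDegree_lt_iff_degree_lt hp).2 hdeg
    exact Polynomial.eq_zero_of_natDegree_lt_card_of_eval_eq_zero p hdist hroot
      (by simpa [Fintype.card_fin] using hnd)

private lemma degree_C_mul_le' {a : ℝ} {q : ℝ[X]} : (Polynomial.C a * q).degree ≤ q.degree := by
  refine (Polynomial.degree_mul_le _ _).trans ?_
  calc (Polynomial.C a).degree + q.degree ≤ 0 + q.degree :=
        add_le_add Polynomial.degree_C_le le_rfl
    _ = q.degree := zero_add _

theorem laurent_part_negative_powers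
    (n s : ℕ) (hn : 0 < n) (l : Fin n → ℝ)
    (hdist : Function.Injective l) (hne : ∀ i, l i ≠ 0)
    (V : ℤ → Fin n → ℝ)
    (hV : ∀ (m : ℤ) (i : Fin n),
      (l i) ^ m + ∑ j : Fin n, V m j * (l i) ^ ((n : ℤ) - 1 - (j : ℕ)) = 0) :
    ∃ R : ℝ[X], R.degree < n ∧
      ∀ x : ℝ, x ≠ 0 → (∏ k : Fin n, (x - l k)) ≠ 0 →
        x ^ (-(s : ℤ)) / ∏ k : Fin n, (x - l k)
          = (∑ r ∈ Finset.Icc 1 s, V (-(s : ℤ) + r - 1) ⟨0, hn⟩ * x ^ (-(r : ℤ)))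
            + R.eval x / ∏ k : Fin n, (x - l k) := by
  classical
  set z : Fin n := ⟨0, hn⟩ with hz
  set u : ℝ[X] := ∏ k : Fin n, (X - C (l k)) with hu
  have hu_eval : ∀ x : ℝ, u.eval x = ∏ k : Fin n, (x - l k) := by
    intro x; simp [hu, eval_prod]
  have hu_monic : u.Monic := monic_prod_of_monic _ _ fun k _ => monic_X_sub_C (l k)
  have hu_deg : u.natDegree = n := by
    rw [hu, natDegree_prod_of_monic (Finset.univ : Finset (Fin n))
      (fun k => X - C (l k)) (fun k _ => monic_X_sub_C (l k))]
    simp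
  have hu_ne : u ≠ 0 := hu_monic.ne_zero
  have hu_root : ∀ i, u.eval (l i) = 0 := by
    intro i; rw [hu_eval]; exact Finset.prod_eq_zero (Finset.mem_univ i) (by ring)
  set W : ℤ → ℝ[X] := fun m => ∑ j : Fin n, C (V m j) * X ^ (n - 1 - (j : ℕ)) with hW
  have hWdeg : ∀ m, (W m).degree < n := by
    intro m
    refine lt_of_le_of_lt (Polynomial.degree_sum_le _ _) ?_
    rw [Finset.sup_lt_iff (by exact_mod_cast WithBot.bot_lt_coe n)]
    intro j _
    refine lt_of_le_of_lt (degree_C_mul_X_pow_le _ _) ?_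
    exact_mod_cast Nat.lt_of_le_of_lt (Nat.sub_le _ _) (Nat.sub_lt hn one_pos)
  have hWeval : ∀ m (i : Fin n), (W m).eval (l i) = -(l i) ^ m := by
    intro m i
    have h := hV m i
    have heq : (W m).eval (l i) = ∑ j : Fin n, V m j * (l i) ^ ((n : ℤ) - 1 - (j : ℕ)) := by
      rw [hW]
      simp only [eval_finset_sum, eval_mul, eval_C, eval_pow, eval_X]
      refine Finset.sum_congr rfl fun j _ => ?_
      congr 1
      rw [show ((n : ℤ) - 1 - (j : ℕ)) = ((n - 1 - (j : ℕ) : ℕ) : ℤ) by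
          have := j.is_lt
          rw [Nat.cast_sub (by omega), Nat.cast_sub (by exact_mod_cast hn)]
          push_cast; ring,
        zpow_natCast]
    rw [heq]; linarith
  -- Lemma 1 : W 0 = -1
  have hW0 : W 0 = -1 := by
    have h0 : W 0 + 1 = 0 := by
      apply zero_of_degree_lt_of_roots l hdist
      · refine lt_of_le_of_lt (Polynomial.degree_add_le _ _) ?_
        rw [max_lt_iff]
        exact ⟨hWdeg 0, lt_of_le_of_lt degree_one_le (by exact_mod_cast hn)⟩
      · intro i; simp [hWeval 0 i]
    exact eq_neg_of_add_eq_zero_left h0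
  -- Lemma 2 : X * W (m-1) = W m + C (V (m-1) z) * u
  have hWrec : ∀ m : ℤ, X * W (m - 1) = W m + C (V (m - 1) z) * u := by
    intro m
    have hXW : X * W (m - 1) = ∑ j : Fin n, C (V (m - 1) j) * X ^ (n - (j : ℕ)) := by
      rw [hW, Finset.mul_sum]
      refine Finset.sum_congr rfl fun j _ => ?_
      have := j.is_lt
      rw [show n - (j : ℕ) = (n - 1 - (j : ℕ)) + 1 by omega]
      ring
    have huXn : (u - X ^ n).degree < (n : WithBot ℕ) := by
      have hdu : u.degree = (n : WithBot ℕ) := by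
        rw [Polynomial.degree_eq_natDegree hu_ne, hu_deg]
      have := Polynomial.degree_sub_lt (q := X ^ n) (by rw [hdu, degree_X_pow]) hu_ne
        (by rw [hu_monic.leadingCoeff, (Polynomial.monic_X_pow n).leadingCoeff])
      rwa [hdu] at this
    set P : ℝ[X] := X * W (m - 1) - W m - C (V (m - 1) z) * u with hP
    have hPz : P = 0 := by
      apply zero_of_degree_lt_of_roots l hdist
      · have hsplit : P = (∑ j ∈ Finset.univ.erase z, C (V (m - 1) j) * X ^ (n - (j : ℕ)))
            - W m - C (V (m - 1) z) * (u - X ^ n) := by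
          rw [hP, hXW, ← Finset.add_sum_erase _ _ (Finset.mem_univ z)]
          rw [show ((z : ℕ)) = 0 from rfl, Nat.sub_zero]
          ring
        rw [hsplit]
        have h1 : (∑ j ∈ Finset.univ.erase z, C (V (m - 1) j) * X ^ (n - (j : ℕ))).degree
            < (n : WithBot ℕ) := by
          refine lt_of_le_of_lt (Polynomial.degree_sum_le _ _) ?_
          rw [Finset.sup_lt_iff (by exact_mod_cast WithBot.bot_lt_coe n)]
          intro j hj
          refine lt_of_le_of_lt (degree_C_mul_X_pow_le _ _) ?_
          have hj0 : (j : ℕ) ≠ 0 := by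
            intro h
            exact (Finset.mem_erase.1 hj).1 (by apply Fin.ext; simpa [hz] using h)
          exact_mod_cast Nat.sub_lt hn (Nat.pos_of_ne_zero hj0)
        have h2 : (C (V (m - 1) z) * (u - X ^ n)).degree < (n : WithBot ℕ) :=
          lt_of_le_of_lt degree_C_mul_le' huXn
        refine lt_of_le_of_lt (Polynomial.degree_sub_le _ _) ?_
        rw [max_lt_iff]
        refine ⟨lt_of_le_of_lt (Polynomial.degree_sub_le _ _) ?_, h2⟩
        rw [max_lt_iff]; exact ⟨h1, hWdeg m⟩
      · intro i
        have hl := hne i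
        simp only [hP, eval_sub, eval_mul, eval_X, eval_C, hu_root i, mul_zero, sub_zero,
          hWeval]
        rw [show m = (m - 1) + 1 by ring, zpow_add_one₀ hl]
        ring_nf
    have h0 : X * W (m - 1) - W m - C (V (m - 1) z) * u = 0 := hPz
    linear_combination h0
  -- the multiplied identity T
  have hT : ∀ (t : ℕ) (x : ℝ),
      (∑ i ∈ Finset.range t, V (-(t : ℤ) + i) z * x ^ (t - 1 - i)) * u.eval x
        - x ^ t * (W (-(t : ℤ))).eval x = 1 := by
    intro t
    induction t with
    | zero =>
      intro x
      simp [hW0]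
    | succ t ih =>
      intro x
      have hrec := hWrec (-(t : ℤ))
      have hrec' : x * (W (-(t : ℤ) - 1)).eval x
          = (W (-(t : ℤ))).eval x + V (-(t : ℤ) - 1) z * u.eval x := by
        have := congrArg (Polynomial.eval x) hrec
        simpa using this
      have hsum : (∑ i ∈ Finset.range (t + 1), V (-((t : ℕ) + 1 : ℤ) + i) z * x ^ (t + 1 - 1 - i))
          = (∑ i ∈ Finset.range t, V (-(t : ℤ) + i) z * x ^ (t - 1 - i))
            + V (-(t : ℤ) - 1) z * x ^ t := by
        rw [Finset.sum_range_succ']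
        congr 1
        · refine Finset.sum_congr rfl fun k hk => ?_
          have h1 : (-((t : ℕ) + 1 : ℤ) + ((k : ℕ) + 1 : ℕ)) = -(t : ℤ) + k := by
            push_cast; ring
          rw [h1, show (t + 1 - 1 - (k + 1)) = t - 1 - k by omega]
        · have h1 : (-((t : ℕ) + 1 : ℤ) + ((0 : ℕ) : ℤ)) = -(t : ℤ) - 1 := by push_cast; ring
          rw [h1]; norm_num
      have hWcast : (-((t : ℕ) + 1 : ℤ)) = -(t : ℤ) - 1 := by ring
      calc (∑ i ∈ Finset.range (t + 1), V (-((t : ℕ) + 1 : ℤ) + i) z * x ^ (t + 1 - 1 - i))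
            * u.eval x - x ^ (t + 1) * (W (-((t : ℕ) + 1 : ℤ))).eval x
          = ((∑ i ∈ Finset.range t, V (-(t : ℤ) + i) z * x ^ (t - 1 - i))
              + V (-(t : ℤ) - 1) z * x ^ t) * u.eval x
            - x ^ t * (x * (W (-(t : ℤ) - 1)).eval x) := by
            rw [hsum, hWcast]; ring
        _ = (∑ i ∈ Finset.range t, V (-(t : ℤ) + i) z * x ^ (t - 1 - i)) * u.eval x
            - x ^ t * (W (-(t : ℤ))).eval x := by
            rw [hrec']; ring
        _ = 1 := ih x
  -- conclusion
  refine ⟨-(W (-(s : ℤ))), ?_, ?_⟩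
  · simpa [Polynomial.degree_neg] using hWdeg (-(s : ℤ))
  · intro x hx hux
    have hux' : u.eval x ≠ 0 := by rw [hu_eval]; exact hux
    have hT' := hT s x
    have hxs : (x : ℝ) ^ s ≠ 0 := pow_ne_zero _ hx
    -- rewrite the Icc sum
    have hsum : (∑ r ∈ Finset.Icc 1 s, V (-(s : ℤ) + r - 1) z * x ^ (-(r : ℤ)))
        = (x ^ s)⁻¹ * ∑ i ∈ Finset.range s, V (-(s : ℤ) + i) z * x ^ (s - 1 - i) := by
      rw [← Finset.Ico_add_one_right_eq_Icc, Finset.sum_Ico_eq_sum_range, Finset.mul_sum]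
      refine Finset.sum_congr rfl fun i hi => ?_
      have hi' := Finset.mem_range.1 hi
      have h1 : (-(s : ℤ) + ((1 + i : ℕ) : ℤ) - 1) = -(s : ℤ) + i := by push_cast; ring
      have h2 : x ^ (-((1 + i : ℕ) : ℤ)) = (x ^ (1 + i))⁻¹ := by
        rw [zpow_neg, zpow_natCast]
      rw [h1, h2]
      have h3 : x ^ s = x ^ (1 + i) * x ^ (s - 1 - i) := by
        rw [← pow_add]; congr 1; omega
      field_simp [h3]
      rw [h3]; ring
    rw [← hu_eval x] at *
    rw [hsum]
    have hxz : x ^ (-(s : ℤ)) = (x ^ s)⁻¹ := by rw [zpow_neg, zpow_natCast]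
    rw [hxz]
    rw [Polynomial.eval_neg]
    field_simp
    linear_combination -hT'
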